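/- Assume c² := ∫₀^∞ w(x)⁻¹ dx < ∞. Then for every t ≥ 0 the right-shift S_t f := f(t + ·) maps H_w into H_w and is uniformly bounded: ‖S_t f‖²_w ≤ 2 (1 + c²) ‖f‖²_w for all f ∈ H_w and all t ≥ 0; in particular the operator norm of S_t on H_w is at most √(2(1+c²)). -/

import Mathlib

open MeasureTheory Filter Set
open scoped ENNReal NNReal Topology

/-- `f' : ℝ → H` is a weak derivative of `f : ℝ → H` on `[0,∞)`: it is locally Bochner
integrable and the fundamental theorem of calculus `f(x) = f(0) + ∫₀ˣ f'(y) dy` holds. -/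
def HasWeakDeriv {H : Type*} [NormedAddCommGroup H] [NormedSpace ℝ H]
    (f f' : ℝ → H) : Prop :=
  (∀ x : ℝ, 0 ≤ x → IntegrableOn f' (Icc 0 x)) ∧
    ∀ x : ℝ, 0 ≤ x → f x = f 0 + ∫ y in Ioc (0 : ℝ) x, f' y

/-- The squared norm `‖f‖²_w = |f(0)|²_H + ∫₀^∞ w(x) |f'(x)|²_H dx` of an element of the
`H`-valued Filipovic space, recorded through the value `a = f(0)` and the weak derivative `f'`
(extended-real valued, so membership in `H_w` means this quantity is finite). -/
noncomputable def wNormSq {H : Type*} [NormedAddCommGroup H] (w : ℝ → ℝ) (a : H)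
    (f' : ℝ → H) : ℝ≥0∞ :=
  (‖a‖₊ : ℝ≥0∞) ^ 2 + ∫⁻ x in Ioi (0 : ℝ), ENNReal.ofReal (w x) * (‖f' x‖₊ : ℝ≥0∞) ^ 2

/-- `(a+b)^2 ≤ 2a^2 + 2b^2` in `ℝ≥0∞`. -/
lemma aux_sq_add_le (a b : ℝ≥0∞) : (a + b) ^ 2 ≤ 2 * a ^ 2 + 2 * b ^ 2 := by
  rcases eq_or_ne a ⊤ with ha | ha
  · simp [ha, ENNReal.top_pow]
  rcases eq_or_ne b ⊤ with hb | hb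
  · simp [hb, ENNReal.top_pow]
  lift a to ℝ≥0 using ha
  lift b to ℝ≥0 using hb
  have h : ((a : ℝ) + b) ^ 2 ≤ 2 * (a : ℝ) ^ 2 + 2 * (b : ℝ) ^ 2 := by
    nlinarith [sq_nonneg ((a : ℝ) - b)]
  have h' : (a + b) ^ 2 ≤ 2 * a ^ 2 + 2 * b ^ 2 := by
    rw [← NNReal.coe_le_coe]; push_cast; exact h
  exact_mod_cast h'

/-- `(x^(1/2))^2 = x` in `ℝ≥0∞` (rpow then natural square). -/
lemma aux_rpow_half_sq (x : ℝ≥0∞) : (x ^ ((1 : ℝ) / 2)) ^ (2 : ℕ) = x := by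
  rw [← ENNReal.rpow_natCast (x ^ ((1 : ℝ) / 2)) 2, ← ENNReal.rpow_mul]
  norm_num

/-- Lemma 3.4. If `∫₀^∞ w⁻¹ < ∞`, the right-shift `S_t f := f(t + ·)` maps
`H_w` into itself with `‖S_t f‖²_w ≤ 2 (1 + c²) ‖f‖²_w`, `c² = ∫₀^∞ w⁻¹`; in particular
`‖S_t‖_op ≤ √(2(1+c²))`. -/
theorem stmt_6 {H : Type*} [NormedAddCommGroup H] [InnerProductSpace ℝ H] [CompleteSpace H]
    [SecondCountableTopology H]
    (w : ℝ → ℝ) (hwmono : MonotoneOn w (Ici 0)) (hw0 : w 0 = 1)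
    (hw1 : ∀ x : ℝ, 0 ≤ x → 1 ≤ w x) (hwmeas : Measurable w)
    (hc : (∫⁻ x in Ioi (0 : ℝ), ENNReal.ofReal (w x)⁻¹) < ⊤) :
    ∀ t : ℝ, 0 ≤ t → ∀ f f' : ℝ → H, HasWeakDeriv f f' → wNormSq w (f 0) f' < ⊤ →
      HasWeakDeriv (fun x => f (t + x)) (fun x => f' (t + x))
        ∧ wNormSq w (f t) (fun x => f' (t + x))
            ≤ 2 * (1 + ∫⁻ x in Ioi (0 : ℝ), ENNReal.ofReal (w x)⁻¹) * wNormSq w (f 0) f' := by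
  intro t ht f f' hf hfin
  have mp : MeasurePreserving (fun x : ℝ => t + x) volume volume :=
    measurePreserving_add_left volume t
  have emb : MeasurableEmbedding (fun x : ℝ => t + x) :=
    (MeasurableEquiv.addLeft t).measurableEmbedding
  -- Part 1 : the shift has a weak derivative.
  have hwd : HasWeakDeriv (fun x => f (t + x)) (fun x => f' (t + x)) := by
    constructor
    · intro x hx
      have hpre : (fun y : ℝ => t + y) ⁻¹' Icc t (t + x) = Icc 0 x := by
        ext y
        simp only [mem_preimage, mem_Icc]
        constructor <;> intro h <;> constructor <;> linarith [h.1, h.2]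
      have h1 : IntegrableOn f' (Icc t (t + x)) :=
        (hf.1 (t + x) (by linarith)).mono_set (Icc_subset_Icc_left ht)
      have := (mp.integrableOn_comp_preimage emb (f := f') (s := Icc t (t + x))).mpr h1
      rwa [hpre] at this
    · intro x hx
      have hsplit : ∫ y in Ioc (0 : ℝ) (t + x), f' y
          = (∫ y in Ioc (0 : ℝ) t, f' y) + ∫ y in Ioc t (t + x), f' y := by
        rw [← Ioc_union_Ioc_eq_Ioc ht (by linarith : t ≤ t + x)]
        exact setIntegral_union (Set.Ioc_disjoint_Ioc_of_le le_rfl) measurableSet_Ioc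
          ((hf.1 t ht).mono_set Ioc_subset_Icc_self)
          ((hf.1 (t + x) (by linarith)).mono_set
            (fun y hy => ⟨by linarith [hy.1], hy.2⟩))
      have hpre : (fun y : ℝ => t + y) ⁻¹' Ioc t (t + x) = Ioc 0 x := by
        ext y
        simp only [mem_preimage, mem_Ioc]
        constructor <;> intro h <;> constructor <;> [linarith [h.1]; linarith [h.2];
          linarith [h.1]; linarith [h.2]]
      have hcv : ∫ y in Ioc (0 : ℝ) x, f' (t + y) = ∫ y in Ioc t (t + x), f' y := by
        have := mp.setIntegral_preimage_emb emb f' (Ioc t (t + x))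
        rwa [hpre] at this
      simp only
      rw [add_zero, hf.2 (t + x) (by linarith), hf.2 t ht, hsplit, hcv, add_assoc]
  refine ⟨hwd, ?_⟩
  -- Notation.
  set C : ℝ≥0∞ := ∫⁻ x in Ioi (0 : ℝ), ENNReal.ofReal (w x)⁻¹ with hC
  set I : ℝ≥0∞ := ∫⁻ x in Ioi (0 : ℝ), ENNReal.ofReal (w x) * (‖f' x‖₊ : ℝ≥0∞) ^ 2 with hI
  set A : ℝ≥0∞ := (‖f 0‖₊ : ℝ≥0∞) ^ 2 with hA
  -- Part 2a : shifted energy integral is bounded by I.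
  have hIshift : (∫⁻ x in Ioi (0 : ℝ), ENNReal.ofReal (w x) * (‖f' (t + x)‖₊ : ℝ≥0∞) ^ 2) ≤ I := by
    have hpre : (fun y : ℝ => t + y) ⁻¹' Ioi t = Ioi 0 := by
      ext y; simp only [mem_preimage, mem_Ioi]; constructor <;> intro h <;> linarith
    have key := mp.setLIntegral_comp_preimage_emb emb
      (fun y => ENNReal.ofReal (w (y - t)) * (‖f' y‖₊ : ℝ≥0∞) ^ 2) (Ioi t)
    rw [hpre] at key
    have hsimp : ∀ x : ℝ, ENNReal.ofReal (w (t + x - t)) * (‖f' (t + x)‖₊ : ℝ≥0∞) ^ 2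
        = ENNReal.ofReal (w x) * (‖f' (t + x)‖₊ : ℝ≥0∞) ^ 2 := by
      intro x; rw [add_sub_cancel_left]
    simp only [hsimp] at key
    rw [key]
    calc (∫⁻ y in Ioi t, ENNReal.ofReal (w (y - t)) * (‖f' y‖₊ : ℝ≥0∞) ^ 2)
        ≤ ∫⁻ y in Ioi t, ENNReal.ofReal (w y) * (‖f' y‖₊ : ℝ≥0∞) ^ 2 := by
          refine setLIntegral_mono' measurableSet_Ioi (fun y hy => ?_)
          have h0 : (0 : ℝ) ≤ y - t := by simp only [mem_Ioi] at hy; linarith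
          have h1 : (0 : ℝ) ≤ y := by linarith
          exact mul_le_mul_left
            (ENNReal.ofReal_le_ofReal (hwmono h0 h1 (by linarith))) _
      _ ≤ I := by
          rw [hI]
          exact lintegral_mono_set (fun y hy => lt_of_le_of_lt ht hy)
  -- Part 2b : bound on `‖f t‖`.
  have hmem : AEMeasurable (fun y => (‖f' y‖₊ : ℝ≥0∞)) (volume.restrict (Ioc 0 t)) :=
    ((hf.1 t ht).mono_set Ioc_subset_Icc_self).aestronglyMeasurable.enorm
  -- Cauchy–Schwarz on `Ioc 0 t`.
  have hCS : (∫⁻ y in Ioc (0 : ℝ) t, (‖f' y‖₊ : ℝ≥0∞))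
      ≤ C ^ ((1 : ℝ) / 2) * I ^ ((1 : ℝ) / 2) := by
    set F : ℝ → ℝ≥0∞ := fun y => ((ENNReal.ofReal (w y))⁻¹) ^ ((1 : ℝ) / 2) with hF
    set G : ℝ → ℝ≥0∞ := fun y => (ENNReal.ofReal (w y)) ^ ((1 : ℝ) / 2) * (‖f' y‖₊ : ℝ≥0∞)
      with hG
    have hFmeas : Measurable F :=
      (hwmeas.ennreal_ofReal.inv).pow_const _
    have hGmeas : AEMeasurable G (volume.restrict (Ioc 0 t)) :=
      ((hwmeas.ennreal_ofReal.pow_const _).aemeasurable).mul hmem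
    have hpq : Real.HolderConjugate 2 2 := Real.HolderConjugate.two_two
    have hHolder := ENNReal.lintegral_mul_le_Lp_mul_Lq (volume.restrict (Ioc (0 : ℝ) t)) hpq
      hFmeas.aemeasurable hGmeas
    -- identify the three integrals
    have hwpos : ∀ y ∈ Ioc (0 : ℝ) t, (1 : ℝ) ≤ w y := fun y hy => hw1 y (le_of_lt hy.1)
    have hne0 : ∀ y ∈ Ioc (0 : ℝ) t, ENNReal.ofReal (w y) ≠ 0 := by
      intro y hy
      simp only [ne_eq, ENNReal.ofReal_eq_zero, not_le]
      linarith [hwpos y hy]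
    have hFG : ∫⁻ y in Ioc (0 : ℝ) t, (F * G) y = ∫⁻ y in Ioc (0 : ℝ) t, (‖f' y‖₊ : ℝ≥0∞) := by
      refine setLIntegral_congr_fun measurableSet_Ioc (fun y hy => ?_)
      have h0 := hne0 y hy
      have htop : ENNReal.ofReal (w y) ≠ ⊤ := ENNReal.ofReal_ne_top
      simp only [Pi.mul_apply, hF, hG]
      rw [← mul_assoc, ← ENNReal.mul_rpow_of_ne_top (by simpa using h0) htop,
        ENNReal.inv_mul_cancel h0 htop, ENNReal.one_rpow, one_mul]
    have hF2 : (∫⁻ y in Ioc (0 : ℝ) t, F y ^ (2 : ℝ)) ≤ C := by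
      have : ∀ y ∈ Ioc (0 : ℝ) t, F y ^ (2 : ℝ) = ENNReal.ofReal (w y)⁻¹ := by
        intro y hy
        rw [hF]
        rw [← ENNReal.rpow_mul]
        norm_num
        rw [ENNReal.ofReal_inv_of_pos (by linarith [hwpos y hy])]
      rw [setLIntegral_congr_fun measurableSet_Ioc this]
      exact lintegral_mono_set (fun y hy => hy.1)
    have hG2 : (∫⁻ y in Ioc (0 : ℝ) t, G y ^ (2 : ℝ)) ≤ I := by
      have : ∀ y ∈ Ioc (0 : ℝ) t, G y ^ (2 : ℝ)
          = ENNReal.ofReal (w y) * (‖f' y‖₊ : ℝ≥0∞) ^ 2 := by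
        intro y hy
        rw [hG, ENNReal.mul_rpow_of_nonneg _ _ (by norm_num : (0:ℝ) ≤ 2),
          ← ENNReal.rpow_mul, ← ENNReal.rpow_natCast (‖f' y‖₊ : ℝ≥0∞) 2]
        norm_num
      rw [setLIntegral_congr_fun measurableSet_Ioc this]
      rw [hI]
      exact lintegral_mono_set (fun y hy => hy.1)
    calc (∫⁻ y in Ioc (0 : ℝ) t, (‖f' y‖₊ : ℝ≥0∞))
        = ∫⁻ y in Ioc (0 : ℝ) t, (F * G) y := hFG.symm
      _ ≤ (∫⁻ y in Ioc (0 : ℝ) t, F y ^ (2 : ℝ)) ^ ((1:ℝ)/2)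
            * (∫⁻ y in Ioc (0 : ℝ) t, G y ^ (2 : ℝ)) ^ ((1:ℝ)/2) := hHolder
      _ ≤ C ^ ((1 : ℝ) / 2) * I ^ ((1 : ℝ) / 2) :=
          mul_le_mul' (ENNReal.rpow_le_rpow hF2 (by norm_num))
            (ENNReal.rpow_le_rpow hG2 (by norm_num))
  have hft : (‖f t‖₊ : ℝ≥0∞) ≤ (‖f 0‖₊ : ℝ≥0∞) + C ^ ((1 : ℝ) / 2) * I ^ ((1 : ℝ) / 2) := by
    rw [hf.2 t ht]
    calc (‖f 0 + ∫ y in Ioc (0 : ℝ) t, f' y‖₊ : ℝ≥0∞)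
        ≤ (‖f 0‖₊ : ℝ≥0∞) + (‖∫ y in Ioc (0 : ℝ) t, f' y‖₊ : ℝ≥0∞) := by
          exact_mod_cast nnnorm_add_le _ _
      _ ≤ (‖f 0‖₊ : ℝ≥0∞) + ∫⁻ y in Ioc (0 : ℝ) t, (‖f' y‖₊ : ℝ≥0∞) :=
          add_le_add_right (enorm_integral_le_lintegral_enorm _) _
      _ ≤ (‖f 0‖₊ : ℝ≥0∞) + C ^ ((1 : ℝ) / 2) * I ^ ((1 : ℝ) / 2) := add_le_add_right hCS _
  have hftsq : ((‖f t‖₊ : ℝ≥0∞)) ^ 2 ≤ 2 * A + 2 * (C * I) := by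
    calc ((‖f t‖₊ : ℝ≥0∞)) ^ 2
        ≤ ((‖f 0‖₊ : ℝ≥0∞) + C ^ ((1 : ℝ) / 2) * I ^ ((1 : ℝ) / 2)) ^ 2 := by gcongr
      _ ≤ 2 * A + 2 * (C ^ ((1 : ℝ) / 2) * I ^ ((1 : ℝ) / 2)) ^ 2 :=
          aux_sq_add_le _ _
      _ = 2 * A + 2 * (C * I) := by
          rw [mul_pow, aux_rpow_half_sq, aux_rpow_half_sq]
  -- Combine everything.
  have hmain : wNormSq w (f t) (fun x => f' (t + x)) ≤ 2 * A + 2 * (C * I) + I := by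
    unfold wNormSq
    exact add_le_add hftsq hIshift
  have hrhs : 2 * (1 + C) * (A + I) = (2 * A + 2 * (C * I) + I) + (2 * (C * A) + I) := by
    ring
  have hgoal : wNormSq w (f 0) f' = A + I := rfl
  rw [hgoal, hrhs]
  exact hmain.trans le_self_add
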